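/- arXiv:2212.00511 — 5 statements merged into one kernel-verified Lean document; each statement's English description precedes it below -/
import Mathlib

section
/- (Cocycle identity for κ.) Let L ≤ G × H × T, M ≤ H × K × T, N ≤ K × I × T be subgroups of products of finite groups. Then |k₂(L) ∩ k₁(M)| · |k₂(L ∗ M) ∩ k₁(N)| · |K| = |k₂(L) ∩ k₁(M ∗ N)| · |k₂(M) ∩ k₁(N)| · |K|, equivalently (|k₂(L) ∩ k₁(M)|/|H|)·(|k₂(L∗M) ∩ k₁(N)|/|K|) = (|k₂(L) ∩ k₁(M∗N)|/|K|)·(|k₂(M) ∩ k₁(N)|/|H|) as rational numbers. In fact there is a group isomorphism (k₂(L) ∩ k₁(M ∗ N))/(k₂(L) ∩ k₁(M)) ≅ (k₂(L ∗ M) ∩ k₁(N))/(k₂(M) ∩ k₁(N)). -/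
section
variable {A B C : Type*} [Group A] [Group B] [Group C]

/-- `k₁(D) = {a | (a, 1, 1) ∈ D}`. -/
def k1 (D : Subgroup (A × B × C)) : Subgroup A where
  carrier := {a | ((a, 1, 1) : A × B × C) ∈ D}
  one_mem' := D.one_mem
  mul_mem' := fun {a b} ha hb => by simpa using D.mul_mem ha hb
  inv_mem' := fun {a} ha => by simpa using D.inv_mem ha

/-- `k₂(D) = {b | (1, b, 1) ∈ D}`. -/
def k2 (D : Subgroup (A × B × C)) : Subgroup B where
  carrier := {b | ((1, b, 1) : A × B × C) ∈ D}
  one_mem' := D.one_mem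
  mul_mem' := fun {a b} ha hb => by simpa using D.mul_mem ha hb
  inv_mem' := fun {a} ha => by simpa using D.inv_mem ha

end

/-- The star product of subgroups `D ≤ G × H × T` and `E ≤ H × K × T`. -/
def star3 {G H K T : Type*} [Group G] [Group H] [Group K] [Group T]
    (D : Subgroup (G × H × T)) (E : Subgroup (H × K × T)) : Subgroup (G × K × T) where
  carrier := {x | ∃ h : H, ((x.1, h, x.2.2) : G × H × T) ∈ D ∧ ((h, x.2.1, x.2.2) : H × K × T) ∈ E}
  one_mem' := ⟨1, D.one_mem, E.one_mem⟩
  mul_mem' := fun ⟨h₁, hD₁, hE₁⟩ ⟨h₂, hD₂, hE₂⟩ =>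
    ⟨h₁ * h₂, D.mul_mem hD₁ hD₂, E.mul_mem hE₁ hE₂⟩
  inv_mem' := fun ⟨h, hD, hE⟩ => ⟨h⁻¹, D.inv_mem hD, E.inv_mem hE⟩

/-- Cocycle identity for `κ`: for subgroups `L ≤ G × H × T`, `M ≤ H × K × T`, `N ≤ K × I × T`
of products of finite groups,
`|k₂(L) ∩ k₁(M)| · |k₂(L ∗ M) ∩ k₁(N)| · |K| = |k₂(L) ∩ k₁(M ∗ N)| · |k₂(M) ∩ k₁(N)| · |K|`,
and in fact there is a bijection between the corresponding coset quotients
`(k₂(L) ∩ k₁(M ∗ N))/(k₂(L) ∩ k₁(M))` and `(k₂(L ∗ M) ∩ k₁(N))/(k₂(M) ∩ k₁(N))`. -/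
theorem kappa_cocycle {G H K I T : Type*} [Group G] [Group H] [Group K] [Group I] [Group T]
    [Finite G] [Finite H] [Finite K] [Finite I] [Finite T]
    (L : Subgroup (G × H × T)) (M : Subgroup (H × K × T)) (N : Subgroup (K × I × T)) :
    Nat.card ↥(k2 L ⊓ k1 M) * Nat.card ↥(k2 (star3 L M) ⊓ k1 N) * Nat.card K =
      Nat.card ↥(k2 L ⊓ k1 (star3 M N)) * Nat.card ↥(k2 M ⊓ k1 N) * Nat.card K ∧
    Nonempty
      ((↥(k2 L ⊓ k1 (star3 M N)) ⧸ (k2 L ⊓ k1 M).subgroupOf (k2 L ⊓ k1 (star3 M N))) ≃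
       (↥(k2 (star3 L M) ⊓ k1 N) ⧸ (k2 M ⊓ k1 N).subgroupOf (k2 (star3 L M) ⊓ k1 N))) := by
  classical
  set X := k2 L ⊓ k1 (star3 M N) with hXdef
  set Y := k2 (star3 L M) ⊓ k1 N with hYdef
  set S := k2 L ⊓ k1 M with hSdef
  set S' := k2 M ⊓ k1 N with hS'def
  have hXmem : ∀ h : H, h ∈ X ↔
      ((((1:G), h, (1:T)) : G × H × T) ∈ L ∧
        ∃ k : K, ((h, k, (1:T)) : H × K × T) ∈ M ∧ ((k, (1:I), (1:T)) : K × I × T) ∈ N) := by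
    intro h; rw [hXdef, Subgroup.mem_inf]; rfl
  have hYmem : ∀ k : K, k ∈ Y ↔
      ((∃ h : H, (((1:G), h, (1:T)) : G × H × T) ∈ L ∧ ((h, k, (1:T)) : H × K × T) ∈ M) ∧
        ((k, (1:I), (1:T)) : K × I × T) ∈ N) := by
    intro k; rw [hYdef, Subgroup.mem_inf]; rfl
  -- witness choices
  have wf : ∀ x : ↥X, ∃ k : K, (((x:H), k, (1:T)) : H × K × T) ∈ M ∧
      ((k, (1:I), (1:T)) : K × I × T) ∈ N := fun x => ((hXmem x).mp x.2).2
  have wg : ∀ y : ↥Y, ∃ h : H, (((1:G), h, (1:T)) : G × H × T) ∈ L ∧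
      ((h, (y:K), (1:T)) : H × K × T) ∈ M := fun y => ((hYmem y).mp y.2).1
  have fY : ∀ x : ↥X, (wf x).choose ∈ Y := fun x =>
    (hYmem _).mpr ⟨⟨x, ((hXmem x).mp x.2).1, (wf x).choose_spec.1⟩, (wf x).choose_spec.2⟩
  have gX : ∀ y : ↥Y, (wg y).choose ∈ X := fun y =>
    (hXmem _).mpr ⟨(wg y).choose_spec.1, ⟨y, (wg y).choose_spec.2, ((hYmem y).mp y.2).2⟩⟩
  set f : ↥X → ↥Y := fun x => ⟨(wf x).choose, fY x⟩ with hfdef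
  set g : ↥Y → ↥X := fun y => ⟨(wg y).choose, gX y⟩ with hgdef
  -- key transfer lemmas
  have key1 : ∀ (h h' : H) (k k' : K),
      ((h, k, (1:T)) : H × K × T) ∈ M → ((h', k', (1:T)) : H × K × T) ∈ M →
      h⁻¹ * h' ∈ k1 (C := T) M → k⁻¹ * k' ∈ k2 M := by
    intro h h' k k' hm hm' h1
    have hmm := M.mul_mem (M.inv_mem hm) hm'
    have h2 : ((h⁻¹ * h', (1:K), (1:T)) : H × K × T) ∈ M := h1
    have := M.mul_mem (M.inv_mem h2) hmm
    exact (by simpa [mul_assoc] using this : (((1:H), k⁻¹ * k', (1:T)) : H × K × T) ∈ M)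
  have key2 : ∀ (h h' : H) (k k' : K),
      ((h, k, (1:T)) : H × K × T) ∈ M → ((h', k', (1:T)) : H × K × T) ∈ M →
      k⁻¹ * k' ∈ k2 M → h⁻¹ * h' ∈ k1 (C := T) M := by
    intro h h' k k' hm hm' h1
    have hmm := M.mul_mem (M.inv_mem hm) hm'
    have h2 : (((1:H), k⁻¹ * k', (1:T)) : H × K × T) ∈ M := h1
    have := M.mul_mem hmm (M.inv_mem h2)
    exact (by simpa [mul_assoc] using this : ((h⁻¹ * h', (1:K), (1:T)) : H × K × T) ∈ M)
  have hf : ∀ x x' : ↥X, @Setoid.r _ (QuotientGroup.leftRel (S.subgroupOf X)) x x' → @Setoid.r _ (QuotientGroup.leftRel (S'.subgroupOf Y)) (f x) (f x') := by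
    intro x x' hr
    rw [QuotientGroup.leftRel_apply, Subgroup.mem_subgroupOf] at hr ⊢
    have hr' : (x:H)⁻¹ * (x':H) ∈ S := by simpa using hr
    have hk2 : ((f x : K))⁻¹ * (f x' : K) ∈ k2 M :=
      key1 x x' _ _ (wf x).choose_spec.1 (wf x').choose_spec.1 hr'.2
    have hk1 : ((f x : K))⁻¹ * (f x' : K) ∈ k1 (C := T) N :=
      (k1 N).mul_mem ((k1 N).inv_mem (wf x).choose_spec.2) (wf x').choose_spec.2
    rw [hS'def]
    simpa using Subgroup.mem_inf.mpr ⟨hk2, hk1⟩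
  have hg : ∀ y y' : ↥Y, @Setoid.r _ (QuotientGroup.leftRel (S'.subgroupOf Y)) y y' → @Setoid.r _ (QuotientGroup.leftRel (S.subgroupOf X)) (g y) (g y') := by
    intro y y' hr
    rw [QuotientGroup.leftRel_apply, Subgroup.mem_subgroupOf] at hr ⊢
    have hr' : (y:K)⁻¹ * (y':K) ∈ S' := by simpa using hr
    have hk1 : ((g y : H))⁻¹ * (g y' : H) ∈ k1 (C := T) M :=
      key2 _ _ y y' (wg y).choose_spec.2 (wg y').choose_spec.2 hr'.1
    have hk2 : ((g y : H))⁻¹ * (g y' : H) ∈ k2 L :=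
      (k2 L).mul_mem ((k2 L).inv_mem (wg y).choose_spec.1) (wg y').choose_spec.1
    rw [hSdef]
    simpa using Subgroup.mem_inf.mpr ⟨hk2, hk1⟩
  set F : (↥X ⧸ S.subgroupOf X) → (↥Y ⧸ S'.subgroupOf Y) := Quotient.map' f hf with hFdef
  set Gm : (↥Y ⧸ S'.subgroupOf Y) → (↥X ⧸ S.subgroupOf X) := Quotient.map' g hg with hGdef
  have hleft : ∀ q, Gm (F q) = q := by
    intro q
    induction q using Quotient.inductionOn' with
    | h x =>
      show Quotient.mk'' (g (f x)) = Quotient.mk'' x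
      apply Quotient.sound'
      rw [QuotientGroup.leftRel_apply, Subgroup.mem_subgroupOf]
      have hk1 : ((g (f x) : H))⁻¹ * (x:H) ∈ k1 (C := T) M :=
        key2 _ _ (f x : K) (f x : K) (wg (f x)).choose_spec.2 (wf x).choose_spec.1
          (by simpa using (k2 M).one_mem)
      have hk2 : ((g (f x) : H))⁻¹ * (x:H) ∈ k2 L :=
        (k2 L).mul_mem ((k2 L).inv_mem (wg (f x)).choose_spec.1) ((hXmem x).mp x.2).1
      rw [hSdef]
      simpa using Subgroup.mem_inf.mpr ⟨hk2, hk1⟩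
  have hright : ∀ q, F (Gm q) = q := by
    intro q
    induction q using Quotient.inductionOn' with
    | h y =>
      show Quotient.mk'' (f (g y)) = Quotient.mk'' y
      apply Quotient.sound'
      rw [QuotientGroup.leftRel_apply, Subgroup.mem_subgroupOf]
      have hk2 : ((f (g y) : K))⁻¹ * (y:K) ∈ k2 M :=
        key1 (g y : H) (g y : H) _ _ (wf (g y)).choose_spec.1 (wg y).choose_spec.2
          (by simpa using (k1 (C := T) M).one_mem)
      have hk1 : ((f (g y) : K))⁻¹ * (y:K) ∈ k1 (C := T) N :=
        (k1 N).mul_mem ((k1 N).inv_mem (wf (g y)).choose_spec.2) ((hYmem y).mp y.2).2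
      rw [hS'def]
      simpa using Subgroup.mem_inf.mpr ⟨hk2, hk1⟩
  have e : (↥X ⧸ S.subgroupOf X) ≃ (↥Y ⧸ S'.subgroupOf Y) := ⟨F, Gm, hleft, hright⟩
  refine ⟨?_, ⟨e⟩⟩
  -- cardinality identity
  have hSle : S ≤ X := by
    rw [hSdef, hXdef]
    exact inf_le_inf_left _ (fun h hh => ⟨1, hh, N.one_mem⟩)
  have hS'le : S' ≤ Y := by
    rw [hS'def, hYdef]
    exact inf_le_inf_right _ (fun k hk => ⟨1, L.one_mem, hk⟩)
  have cX : Nat.card ↥X = Nat.card (↥X ⧸ S.subgroupOf X) * Nat.card ↥S := by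
    rw [Subgroup.card_eq_card_quotient_mul_card_subgroup (s := S.subgroupOf X),
      Nat.card_congr (Subgroup.subgroupOfEquivOfLe hSle).toEquiv]
  have cY : Nat.card ↥Y = Nat.card (↥Y ⧸ S'.subgroupOf Y) * Nat.card ↥S' := by
    rw [Subgroup.card_eq_card_quotient_mul_card_subgroup (s := S'.subgroupOf Y),
      Nat.card_congr (Subgroup.subgroupOfEquivOfLe hS'le).toEquiv]
  have cq : Nat.card (↥X ⧸ S.subgroupOf X) = Nat.card (↥Y ⧸ S'.subgroupOf Y) :=
    Nat.card_congr e
  rw [cX, cY, cq]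
  ring
end

section
/- Two such subgroups are conjugate in G × G × T if and only if their data agree up to twist: D_{σ, α, T₀} is conjugate in G × G × T to D_{τ, β, T₁} if and only if there exist g ∈ G and t ∈ T such that T₀ = tT₁t⁻¹, σ = τ ∘ c_g (where c_g is conjugation x ↦ gxg⁻¹ on G), and α = β ∘ c_{t⁻¹} (i.e. α(t') = β(t⁻¹ t' t) for all t' ∈ T₀). -/
/-- The twisted diagonal subgroup `D_{σ, α, T₀} = {(α(t)σ(g), g, t) | g ∈ G, t ∈ T₀}`. -/
def twistedDiag {G T : Type*} [Group G] [Group T] (σ : G ≃* G) (T₀ : Subgroup T)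
    (α : T₀ →* Subgroup.center G) : Subgroup (G × G × T) where
  carrier := {x | ∃ (g : G) (t : T₀), x = (((α t : G) * σ g, g, (t : T)) : G × G × T)}
  one_mem' := ⟨1, 1, by simp; rfl⟩
  mul_mem' := by
    rintro x y ⟨g₁, t₁, rfl⟩ ⟨g₂, t₂, rfl⟩
    refine ⟨g₁ * g₂, t₁ * t₂, ?_⟩
    simp only [Prod.mk_mul_mk, map_mul, Subgroup.coe_mul, Prod.mk.injEq]
    exact ⟨(Commute.mul_mul_mul_comm
      (Subgroup.mem_center_iff.mp (α t₂).2 (σ g₁)) _ _), trivial⟩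
  inv_mem' := by
    rintro x ⟨g, t, rfl⟩
    refine ⟨g⁻¹, t⁻¹, ?_⟩
    simp only [Prod.inv_mk, map_inv, Subgroup.coe_inv, Prod.mk.injEq]
    refine ⟨?_, trivial⟩
    rw [mul_inv_rev]
    exact Commute.inv_inv (Subgroup.mem_center_iff.mp (α t).2 (σ g))

/-- Conjugate `a X a⁻¹` of a subgroup. -/
def conjSubgroup {A : Type*} [Group A] (a : A) (X : Subgroup A) : Subgroup A :=
  X.map (MulAut.conj a).toMonoidHom

lemma mem_twistedDiag {G T : Type*} [Group G] [Group T] (σ : G ≃* G) (T₀ : Subgroup T)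
    (α : T₀ →* Subgroup.center G) (x : G × G × T) :
    x ∈ twistedDiag σ T₀ α ↔ ∃ (g : G) (t : T₀), x = ((α t : G) * σ g, g, (t : T)) :=
  Iff.rfl

lemma mem_conjSubgroup {A : Type*} [Group A] (a : A) (X : Subgroup A) (y : A) :
    y ∈ conjSubgroup a X ↔ ∃ x ∈ X, a * x * a⁻¹ = y := by
  simp [conjSubgroup, Subgroup.mem_map]

lemma conj_central {G : Type*} [Group G] (c a b : G) (hc : ∀ x, x * c = c * x) :
    a * (c * b) * a⁻¹ = c * (a * b * a⁻¹) := by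
  rw [← mul_assoc, hc a, mul_assoc, mul_assoc, mul_assoc]

/-- Two twisted diagonal subgroups `D_{σ, α, T₀}` and `D_{τ, β, T₁}` are conjugate in
`G × G × T` if and only if there exist `g ∈ G` and `t ∈ T` with `T₀ = tT₁t⁻¹`,
`σ = τ ∘ c_g` and `α = β ∘ c_{t⁻¹}`. -/
theorem twistedDiag_conj_iff {G T : Type*} [Group G] [Group T]
    (σ τ : G ≃* G) (T₀ T₁ : Subgroup T)
    (α : T₀ →* Subgroup.center G) (β : T₁ →* Subgroup.center G) :
    (∃ a : G × G × T, conjSubgroup a (twistedDiag τ T₁ β) = twistedDiag σ T₀ α) ↔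
    ∃ (g : G) (t : T) (hT : conjSubgroup t T₁ = T₀),
      (∀ x : G, σ x = τ (g * x * g⁻¹)) ∧
      ∀ s : T₁,
        (α ⟨t * (s : T) * t⁻¹,
            hT ▸ Subgroup.mem_map_of_mem (MulAut.conj t).toMonoidHom s.2⟩ : G) = (β s : G) := by
  constructor
  · rintro ⟨⟨a₁, a₂, a₃⟩, h⟩
    have key : ∀ x : G × G × T, x ∈ twistedDiag σ T₀ α ↔
        ∃ y ∈ twistedDiag τ T₁ β, ((a₁, a₂, a₃) : G × G × T) * y * ((a₁, a₂, a₃) : G × G × T)⁻¹ = x := by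
      intro x; rw [← h, mem_conjSubgroup]
    have hT : conjSubgroup a₃ T₁ = T₀ := by
      ext u
      rw [mem_conjSubgroup]
      constructor
      · rintro ⟨s, hs, rfl⟩
        have hx : (((β ⟨s, hs⟩ : G) * τ 1, 1, s) : G × G × T) ∈ twistedDiag τ T₁ β :=
          ⟨1, ⟨s, hs⟩, rfl⟩
        obtain ⟨g', t', he⟩ := (key _).mpr ⟨_, hx, rfl⟩
        simp only [Prod.mk_mul_mk, Prod.inv_mk, Prod.mk.injEq] at he
        rw [he.2.2]; exact t'.2
      · intro hu
        have hx : (((α ⟨u, hu⟩ : G) * σ 1, 1, u) : G × G × T) ∈ twistedDiag σ T₀ α :=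
          ⟨1, ⟨u, hu⟩, rfl⟩
        obtain ⟨y, ⟨g', t', rfl⟩, he⟩ := (key _).mp hx
        simp only [Prod.mk_mul_mk, Prod.inv_mk, Prod.mk.injEq] at he
        exact ⟨t', t'.2, he.2.2⟩
    have hσ : ∀ x : G, σ x = τ ((τ.symm a₁ * a₂⁻¹) * x * (τ.symm a₁ * a₂⁻¹)⁻¹) := by
      intro x
      have hy : ((τ (a₂⁻¹ * x * a₂), a₂⁻¹ * x * a₂, (1 : T)) : G × G × T) ∈ twistedDiag τ T₁ β :=
        ⟨a₂⁻¹ * x * a₂, 1, by simp⟩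
      obtain ⟨g', t', he⟩ := (key _).mpr ⟨_, hy, rfl⟩
      simp only [Prod.mk_mul_mk, Prod.inv_mk, Prod.mk.injEq] at he
      have ht1 : t' = 1 := by
        apply Subtype.ext
        have := he.2.2
        simpa using this.symm
      have hg : g' = x := by
        have := he.2.1
        rw [← this]; group
      have h1 := he.1
      rw [ht1, hg] at h1
      simp only [map_one, OneMemClass.coe_one, one_mul] at h1
      rw [← h1]
      simp only [map_mul, map_inv, mul_inv_rev, inv_inv, MulEquiv.apply_symm_apply]
      group
    have hα : ∀ (s : T₁) (hmem : a₃ * (s : T) * a₃⁻¹ ∈ T₀),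
        (α ⟨a₃ * (s : T) * a₃⁻¹, hmem⟩ : G) = (β s : G) := by
      intro s hmem
      have hy : (((β s : G) * τ 1, 1, (s : T)) : G × G × T) ∈ twistedDiag τ T₁ β :=
        ⟨1, s, rfl⟩
      obtain ⟨g', t', he⟩ := (key _).mpr ⟨_, hy, rfl⟩
      simp only [Prod.mk_mul_mk, Prod.inv_mk, Prod.mk.injEq] at he
      have hg : g' = 1 := by
        have := he.2.1; rw [← this]; group
      have ht : t' = ⟨a₃ * (s : T) * a₃⁻¹, hmem⟩ := Subtype.ext he.2.2.symm
      have h1 := he.1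
      rw [hg, ht] at h1
      have hc := Subgroup.mem_center_iff.mp (β s).2 a₁
      simp only [map_one, mul_one] at h1
      rw [← h1, hc, mul_assoc, mul_inv_cancel, mul_one]
    exact ⟨τ.symm a₁ * a₂⁻¹, a₃, hT, hσ, fun s => hα s _⟩
  · rintro ⟨g, t, hT, hσ, hα⟩
    refine ⟨(τ g, 1, t), ?_⟩
    ext x
    rw [mem_conjSubgroup, mem_twistedDiag]
    constructor
    · rintro ⟨y, ⟨h', s, rfl⟩, rfl⟩
      refine ⟨h', ⟨t * (s : T) * t⁻¹,
        hT ▸ Subgroup.mem_map_of_mem (MulAut.conj t).toMonoidHom s.2⟩, ?_⟩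
      simp only [Prod.mk_mul_mk, Prod.inv_mk, Prod.mk.injEq]
      refine ⟨?_, by group, trivial⟩
      rw [conj_central _ _ _ (fun x => Subgroup.mem_center_iff.mp (β s).2 x),
        hα s, hσ h', map_mul, map_mul, map_inv]
    · rintro ⟨g', t', rfl⟩
      have hmem : (t' : T) ∈ conjSubgroup t T₁ := hT.symm ▸ t'.2
      rw [mem_conjSubgroup] at hmem
      obtain ⟨s, hs, hst⟩ := hmem
      have ht'' : t' = ⟨t * ((⟨s, hs⟩ : T₁) : T) * t⁻¹,
          hT ▸ Subgroup.mem_map_of_mem (MulAut.conj t).toMonoidHom (⟨s, hs⟩ : T₁).2⟩ :=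
        Subtype.ext hst.symm
      have hαt : (α t' : G) = (β ⟨s, hs⟩ : G) := by
        rw [ht'']; exact hα ⟨s, hs⟩
      refine ⟨((β ⟨s, hs⟩ : G) * τ g', g', s), ⟨g', ⟨s, hs⟩, rfl⟩, ?_⟩
      simp only [Prod.mk_mul_mk, Prod.inv_mk, Prod.mk.injEq]
      refine ⟨?_, by group, hst⟩
      rw [conj_central _ _ _ (fun x => Subgroup.mem_center_iff.mp (β ⟨s, hs⟩).2 x),
        hαt, hσ g', map_mul, map_mul, map_inv]
end

section
/- Let D ≤ G × G × T be a subgroup with p₁(D) = G, k₁(D) = 1, p₂(D) = G, k₂(D) = 1 (projections and kernels with respect to the first two G-factors). Then there exist a subgroup A ≤ G × T with p₁(A) = G and a surjective group homomorphism f : A → G with ker(f) ∩ (k₁(A) × 1) = 1 such that D = {(f(g, t), g, t) | (g, t) ∈ A}. -/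
section
variable {A B C : Type*} [Group A] [Group B] [Group C]

/-- Projection of a subgroup of `A × B × C` to the first factor. -/
def p1 (D : Subgroup (A × B × C)) : Subgroup A := D.map (MonoidHom.fst A (B × C))

/-- Projection of a subgroup of `A × B × C` to the second factor. -/
def p2 (D : Subgroup (A × B × C)) : Subgroup B :=
  D.map ((MonoidHom.fst B C).comp (MonoidHom.snd A (B × C)))

end

/-- A subgroup `D ≤ G × G × T` with `p₁(D) = G`, `k₁(D) = 1`, `p₂(D) = G`, `k₂(D) = 1`
is the graph of a surjective homomorphism `f : A → G` defined on a subgroup `A ≤ G × T`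
with `p₁(A) = G` and `ker f ∩ (k₁(A) × 1) = 1`. -/
theorem essential_subgroup_form {G T : Type*} [Group G] [Group T] [Finite G] [Finite T]
    (D : Subgroup (G × G × T))
    (hp1 : p1 D = ⊤) (hk1 : k1 D = ⊥) (hp2 : p2 D = ⊤) (hk2 : k2 D = ⊥) :
    ∃ (A : Subgroup (G × T)) (f : A →* G),
      A.map (MonoidHom.fst G T) = ⊤ ∧
      Function.Surjective f ∧
      (∀ a : A, f a = 1 → (a : G × T).2 = 1 → (a : G × T).1 = 1) ∧
      (D : Set (G × G × T)) =
        {x | ∃ a : A, x = ((f a, (a : G × T).1, (a : G × T).2) : G × G × T)} := by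
  have uniq : ∀ {g g' : G} {bt : G × T}, ((g, bt) : G × G × T) ∈ D →
      ((g', bt) : G × G × T) ∈ D → g = g' := by
    intro g g' bt hg hg'
    have hm : ((g * g'⁻¹, (1:G), (1:T)) : G × G × T) ∈ D := by
      have h := D.mul_mem hg (D.inv_mem hg'); simp at h; exact h
    have hk : g * g'⁻¹ ∈ k1 D := hm
    rw [hk1, Subgroup.mem_bot] at hk
    exact mul_inv_eq_one.mp hk
  set A : Subgroup (G × T) := D.map (MonoidHom.snd G (G × T)) with hA
  have hex : ∀ a : A, ∃ g : G, ((g, (a : G × T)) : G × G × T) ∈ D := by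
    rintro ⟨a, ha⟩
    rcases ha with ⟨x, hx, rfl⟩
    exact ⟨x.1, hx⟩
  let f0 : A → G := fun a => (hex a).choose
  have hf0 : ∀ a : A, ((f0 a, (a : G × T)) : G × G × T) ∈ D := fun a => (hex a).choose_spec
  let f : A →* G :=
    { toFun := f0
      map_one' := uniq (hf0 1) (by exact D.one_mem)
      map_mul' := fun a b => by
        have := D.mul_mem (hf0 a) (hf0 b)
        exact uniq (hf0 (a * b)) this }
  have hfspec : ∀ a : A, ((f a, (a : G × T)) : G × G × T) ∈ D := hf0
  refine ⟨A, f, ?_, ?_, ?_, ?_⟩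
  · rw [eq_top_iff]
    intro g _
    have : g ∈ p2 D := by rw [hp2]; trivial
    rcases this with ⟨x, hx, rfl⟩
    exact ⟨x.2, ⟨x, hx, rfl⟩, rfl⟩
  · intro g
    have : g ∈ p1 D := by rw [hp1]; trivial
    rcases this with ⟨x, hx, rfl⟩
    refine ⟨⟨x.2, ⟨x, hx, rfl⟩⟩, ?_⟩
    exact uniq (hfspec _) hx
  · intro a h1 h2
    have := hfspec a
    rw [h1] at this
    have hm : ((1, (a : G × T).1, (1:T)) : G × G × T) ∈ D := by
      rw [← h2]; exact this
    have hk : (a : G × T).1 ∈ k2 D := hm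
    rw [hk2, Subgroup.mem_bot] at hk
    exact hk
  · ext x
    constructor
    · intro hx
      refine ⟨⟨x.2, ⟨x, hx, rfl⟩⟩, ?_⟩
      have := uniq (hfspec ⟨x.2, ⟨x, hx, rfl⟩⟩) hx
      exact Prod.ext this.symm rfl
    · rintro ⟨a, rfl⟩
      exact hfspec a
end

section
/- Suppose gcd(|G|, |T|) = 1 and D ≤ G × G × T satisfies p₁(D) = G, k₁(D) = 1, p₂(D) = G, k₂(D) = 1. Then D = D_{σ, α, T₀} for some automorphism σ of G, some subgroup T₀ ≤ T, and some homomorphism α : T₀ → Z(G); that is, D = {(α(t)σ(g), g, t) | g ∈ G, t ∈ T₀}. (Key step: any subgroup A ≤ G × T with p₁(A) = G must equal G × T₀ for some T₀ ≤ T when gcd(|G|,|T|) = 1.) -/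
/-- If `(|G|, |T|) = 1` and `D ≤ G × G × T` has `p₁(D) = G`, `k₁(D) = 1`, `p₂(D) = G`,
`k₂(D) = 1`, then `D = D_{σ, α, T₀}` for some automorphism `σ` of `G`, some `T₀ ≤ T`
and some homomorphism `α : T₀ → Z(G)`. -/
theorem essential_subgroup_coprime {G T : Type*} [Group G] [Group T] [Finite G] [Finite T]
    (hcop : (Nat.card G).Coprime (Nat.card T))
    (D : Subgroup (G × G × T))
    (hp1 : p1 D = ⊤) (hk1 : k1 D = ⊥) (hp2 : p2 D = ⊤) (hk2 : k2 D = ⊥) :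
    ∃ (σ : G ≃* G) (T₀ : Subgroup T) (α : T₀ →* Subgroup.center G),
      D = twistedDiag σ T₀ α := by
  classical
  -- uniqueness of first coordinate
  have huniq : ∀ a a' b t, ((a, b, t) : G × G × T) ∈ D → ((a', b, t) : G × G × T) ∈ D →
      a = a' := by
    intro a a' b t h h'
    have hm : ((a * a'⁻¹, 1, 1) : G × G × T) ∈ D := by
      have := D.mul_mem h (D.inv_mem h')
      simpa using this
    have hk : a * a'⁻¹ ∈ k1 D := hm
    rw [hk1, Subgroup.mem_bot] at hk
    exact mul_inv_eq_one.mp hk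
  -- the projection to T, as a hom from D
  set q : (G × G × T) →* T := (MonoidHom.snd G T).comp (MonoidHom.snd G (G × T)) with hq
  set π : D →* T := q.comp D.subtype with hπ
  set ρ : D →* G := ((MonoidHom.fst G T).comp (MonoidHom.snd G (G × T))).comp D.subtype with hρ
  have hρsurj : Function.Surjective ρ := by
    intro g
    have : g ∈ p2 D := hp2 ▸ Subgroup.mem_top g
    obtain ⟨x, hx, hxg⟩ := this
    exact ⟨⟨x, hx⟩, hxg⟩
  -- card G divides card D
  have h1 : Nat.card G ∣ Nat.card D := Subgroup.card_dvd_of_surjective ρ hρsurj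
  have h2 : Nat.card D = Nat.card π.range * Nat.card π.ker := by
    rw [Subgroup.card_eq_card_quotient_mul_card_subgroup π.ker,
      Nat.card_congr (QuotientGroup.quotientKerEquivRange π).toEquiv]
  have h3 : Nat.card π.range ∣ Nat.card T := Subgroup.card_subgroup_dvd_card _
  have h4 : Nat.card G ∣ Nat.card π.ker := by
    refine (Nat.Coprime.dvd_of_dvd_mul_left ?_ (h2 ▸ h1))
    exact Nat.Coprime.coprime_dvd_right h3 hcop
  -- the image of ker π under ρ
  set ρ' : π.ker →* G := ρ.comp π.ker.subtype with hρ'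
  have hρ'inj : Function.Injective ρ' := by
    intro x y hxy
    have hx : ((x : D) : G × G × T) ∈ D := (x : D).2
    have hy : ((y : D) : G × G × T) ∈ D := (y : D).2
    have hx3 : ((x : D) : G × G × T).2.2 = 1 := x.2
    have hy3 : ((y : D) : G × G × T).2.2 = 1 := y.2
    have hx' : ((((x:D):G×G×T).1, ρ' x, (1:T)) : G × G × T) ∈ D := by
      have : ((x : D) : G × G × T) = (((x:D):G×G×T).1, ρ' x, (1:T)) := by
        ext <;> simp [hρ', hρ, hx3]
      rw [← this]; exact hx
    have hy' : ((((y:D):G×G×T).1, ρ' y, (1:T)) : G × G × T) ∈ D := by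
      have : ((y : D) : G × G × T) = (((y:D):G×G×T).1, ρ' y, (1:T)) := by
        ext <;> simp [hρ', hρ, hy3]
      rw [← this]; exact hy
    rw [hxy] at hx'
    have h12 : (((x:D):G×G×T).1) = (((y:D):G×G×T).1) := huniq _ _ _ _ hx' hy'
    have : ((x : D) : G × G × T) = ((y : D) : G × G × T) := by
      ext
      · exact h12
      · simpa [hρ', hρ] using hxy
      · rw [hx3, hy3]
    exact Subtype.ext (Subtype.ext this)
  have h5 : Nat.card π.ker = Nat.card ρ'.range := by
    apply Nat.card_congr
    exact (Equiv.ofInjective ρ' hρ'inj).trans (Equiv.setCongr (by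
      rw [MonoidHom.coe_range]))
  have h6 : ρ'.range = ⊤ :=
    Subgroup.eq_top_of_card_eq _ (Nat.dvd_antisymm (Subgroup.card_subgroup_dvd_card _)
      (h5 ▸ h4))
  -- existence: for every b there is a with (a,b,1) ∈ D
  have hex : ∀ b : G, ∃ a : G, ((a, b, 1) : G × G × T) ∈ D := by
    intro b
    have : b ∈ ρ'.range := h6 ▸ Subgroup.mem_top b
    obtain ⟨x, hx⟩ := this
    have hx3 : ((x : D) : G × G × T).2.2 = 1 := x.2
    refine ⟨((x:D):G×G×T).1, ?_⟩
    have : ((x : D) : G × G × T) = ((((x:D):G×G×T).1, b, 1) : G × G × T) := by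
      ext
      · rfl
      · simpa [hρ', hρ] using hx
      · exact hx3
    rw [← this]; exact ((x : D)).2
  -- elements of the form (c,1,t) in D have c = 1
  have hcent : ∀ c t, ((c, 1, t) : G × G × T) ∈ D → c = 1 := by
    intro c t h
    have hn : ((c, 1, t) : G × G × T) ^ (Nat.card T) ∈ D := D.pow_mem h _
    have hm : ((c ^ Nat.card T, 1, 1) : G × G × T) ∈ D := by
      simpa [Prod.pow_mk, pow_card_eq_one'] using hn
    have hk : c ^ Nat.card T ∈ k1 D := hm
    rw [hk1, Subgroup.mem_bot] at hk
    have hdT : orderOf c ∣ Nat.card T := orderOf_dvd_of_pow_eq_one hk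
    have hdG : orderOf c ∣ Nat.card G := orderOf_dvd_natCard c
    have : orderOf c ∣ 1 := hcop ▸ Nat.dvd_gcd hdG hdT
    exact orderOf_eq_one_iff.mp (Nat.eq_one_of_dvd_one this)
  -- define σ₀
  choose σ₀ hσ₀ using hex
  have hσmul : ∀ b b', σ₀ (b * b') = σ₀ b * σ₀ b' := by
    intro b b'
    refine huniq _ _ _ _ (hσ₀ (b * b')) ?_
    have := D.mul_mem (hσ₀ b) (hσ₀ b')
    simpa using this
  set σh : G →* G := MonoidHom.mk' σ₀ hσmul with hσh
  -- key: if (a,b,t) ∈ D then a = σ₀ b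
  have hkey : ∀ a b t, ((a, b, t) : G × G × T) ∈ D → a = σ₀ b := by
    intro a b t h
    have hm : ((a * (σ₀ b)⁻¹, 1, t) : G × G × T) ∈ D := by
      have := D.mul_mem h (D.inv_mem (hσ₀ b))
      simpa using this
    have := hcent _ _ hm
    exact mul_inv_eq_one.mp this
  have hinj : Function.Injective σh := by
    intro b b' h
    have hm : ((1 : G), b * b'⁻¹, (1 : T)) ∈ D := by
      have := D.mul_mem (hσ₀ b) (D.inv_mem (hσ₀ b'))
      simpa [show σ₀ b = σ₀ b' from h] using this
    have hk : b * b'⁻¹ ∈ k2 D := hm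
    rw [hk2, Subgroup.mem_bot] at hk
    exact mul_inv_eq_one.mp hk
  have hsurj : Function.Surjective σh := by
    intro a
    have : a ∈ p1 D := hp1 ▸ Subgroup.mem_top a
    obtain ⟨x, hx, hxa⟩ := this
    refine ⟨x.2.1, ?_⟩
    have : x = ((x.1, x.2.1, x.2.2) : G × G × T) := rfl
    rw [this] at hx
    have := hkey _ _ _ hx
    show σ₀ x.2.1 = a
    rw [← this]
    exact hxa
  refine ⟨MulEquiv.ofBijective σh ⟨hinj, hsurj⟩, D.map q, 1, ?_⟩
  ext x
  constructor
  · intro hx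
    have hx' : ((x.1, x.2.1, x.2.2) : G × G × T) ∈ D := hx
    have hx1 := hkey _ _ _ hx'
    refine ⟨x.2.1, ⟨x.2.2, ⟨x, hx, rfl⟩⟩, ?_⟩
    show x = (((1 : G) * σ₀ x.2.1, x.2.1, x.2.2) : G × G × T)
    rw [one_mul, ← hx1]
  · rintro ⟨g, t, rfl⟩
    obtain ⟨y, hy, hyt⟩ := t.2
    have hy' : ((y.1, y.2.1, y.2.2) : G × G × T) ∈ D := hy
    have h1y : y.1 = σ₀ y.2.1 := hkey _ _ _ hy'
    have hm : ((y.1 * (σ₀ y.2.1)⁻¹, 1, y.2.2) : G × G × T) ∈ D := by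
      have h := D.mul_mem hy' (D.inv_mem (hσ₀ y.2.1))
      have e : ((y.1, y.2.1, y.2.2) : G × G × T) * ((σ₀ y.2.1, y.2.1, 1) : G × G × T)⁻¹ =
          ((y.1 * (σ₀ y.2.1)⁻¹, 1, y.2.2) : G × G × T) := by
        ext <;> simp
      rwa [e] at h
    have h11t : ((1, 1, y.2.2) : G × G × T) ∈ D := by
      rw [h1y] at hm; simpa using hm
    have : ((σ₀ g, g, y.2.2) : G × G × T) ∈ D := by
      have := D.mul_mem (hσ₀ g) h11t
      simpa using this
    have hyt' : y.2.2 = (t : T) := hyt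
    rw [hyt'] at this
    show (((1 : G) * σ₀ g, g, (t : T)) : G × G × T) ∈ D
    rw [one_mul]
    exact this
end

section
/- Let G be a group, Z = Z(G) its center, T a group, X ≤ T a subgroup, α : X → Z a homomorphism, and σ ∈ Aut(G). Consider the action of G × G × T on G ×_Z ((T × Z)/X_α) — the quotient of G × (T × Z)/X_α by the Z-action (identifying [gz, w] with [g, (1,z)w]) — given by (g₁, g₂, t)[g, w] = [g₁ g σ(g₂)⁻¹, (t, 1)w], where X_α := {(x, α(x)) | x ∈ X} ≤ T × Z. Then this action is transitive and the stabilizer of the point [1, (1,1)X_α] is exactly D_{σ, α, X} = {(α(t)σ(g), g, t) | g ∈ G, t ∈ X}; hence G ×_Z (T × Z)/X_α is isomorphic as a (G × G × T)-set to (G × G × T)/D_{σ, α, X}. -/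
section
variable {G T : Type*} [Group G] [Group T]

/-- The graph subgroup `X_α = {(x, α(x)) | x ∈ X} ≤ T × Z(G)`. -/
def graphSub (X : Subgroup T) (α : X →* Subgroup.center G) :
    Subgroup (T × Subgroup.center G) where
  carrier := {p | ∃ x : X, p = ((x : T), α x)}
  one_mem' := ⟨1, by simp; rfl⟩
  mul_mem' := by
    rintro a b ⟨x, rfl⟩ ⟨y, rfl⟩
    exact ⟨x * y, by simp⟩
  inv_mem' := by
    rintro a ⟨x, rfl⟩
    exact ⟨x⁻¹, by simp⟩

/-- The setoid on `G × (T × Z)/X_α` whose quotient is `G ×_Z (T × Z)/X_α`: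
`(g, w) ∼ (g', w')` iff `(g, w) = (g'·z⁻¹, (1, z)·w')` for some `z ∈ Z(G)`. -/
def zSetoid (X : Subgroup T) (α : X →* Subgroup.center G) :
    Setoid (G × ((T × Subgroup.center G) ⧸ graphSub X α)) where
  r p q := ∃ z : Subgroup.center G,
    ((q.1 * (z : G)⁻¹, (((1 : T), z) : T × Subgroup.center G) • q.2) : G × _) = p
  iseqv := by
    constructor
    · intro p
      refine ⟨1, ?_⟩
      rw [show (((1 : T), (1 : Subgroup.center G)) : T × Subgroup.center G) = 1 from rfl, one_smul]
      simp
    · rintro p q ⟨z, rfl⟩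
      refine ⟨z⁻¹, ?_⟩
      rw [smul_smul,
        show (((1 : T), z⁻¹) : T × Subgroup.center G) * ((1 : T), z) = 1 by simp, one_smul]
      simp [mul_assoc]
    · rintro p q r ⟨z₁, rfl⟩ ⟨z₂, rfl⟩
      refine ⟨z₂ * z₁, ?_⟩
      rw [smul_smul,
        show (((1 : T), z₁) : T × Subgroup.center G) * ((1 : T), z₂)
            = (((1 : T), z₂ * z₁) : T × Subgroup.center G) by
          simp [Prod.ext_iff, mul_comm]; exact Subtype.ext (Subgroup.mem_center_iff.mp z₂.2 _)]
      simp [mul_assoc]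
      exact Subgroup.mem_center_iff.mp (z₂⁻¹).2 _

/-- `G ×_Z (T × Z)/X_α`. -/
abbrev fibredProd (X : Subgroup T) (α : X →* Subgroup.center G) : Type _ :=
  Quotient (zSetoid X α)

/-- The action of `(g₁, g₂, t) ∈ G × G × T` on `G ×_Z (T × Z)/X_α`, depending on an
automorphism `σ` of `G`: `(g₁, g₂, t) • [g, w] = [g₁ g σ(g₂)⁻¹, (t, 1) • w]`. -/
def qSmul (σ : G ≃* G) (X : Subgroup T) (α : X →* Subgroup.center G)
    (a : G × G × T) : fibredProd X α → fibredProd X α :=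
  Quotient.map
    (fun p => ((a.1 * p.1 * (σ a.2.1)⁻¹,
      ((a.2.2, (1 : Subgroup.center G)) : T × Subgroup.center G) • p.2) : G × _))
    (by
      rintro p q ⟨z, rfl⟩
      refine ⟨z, ?_⟩
      show ((a.1 * q.1 * (σ a.2.1)⁻¹) * ((z : G))⁻¹,
            (((1 : T), z) : T × Subgroup.center G) •
              (((a.2.2, (1 : Subgroup.center G)) : T × Subgroup.center G) • q.2))
          = (a.1 * (q.1 * ((z : G))⁻¹) * (σ a.2.1)⁻¹,
             ((a.2.2, (1 : Subgroup.center G)) : T × Subgroup.center G) •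
               ((((1 : T), z) : T × Subgroup.center G) • q.2))
      rw [smul_smul, smul_smul,
        show (((1 : T), z) : T × Subgroup.center G) * (a.2.2, (1 : Subgroup.center G))
            = ((a.2.2, (1 : Subgroup.center G)) : T × Subgroup.center G) * ((1 : T), z) by
          simp [Prod.ext_iff]]
      simp only [Prod.mk.injEq, and_true, eq_self_iff_true]
      rw [mul_assoc (a.1 * q.1),
        show (σ a.2.1)⁻¹ * ((z : G))⁻¹ = ((z : G))⁻¹ * (σ a.2.1)⁻¹ from
          Subgroup.mem_center_iff.mp (z⁻¹).2 _]
      simp [mul_assoc])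

/-- The base point `[1, (1, 1)X_α]` of `G ×_Z (T × Z)/X_α`. -/
def basePt (X : Subgroup T) (α : X →* Subgroup.center G) : fibredProd X α :=
  Quotient.mk (zSetoid X α) ((1 : G), QuotientGroup.mk (1 : T × Subgroup.center G))

/-- The `G × G × T`-action on `G ×_Z (T × Z)/X_α` given by
`(g₁, g₂, t) • [g, w] = [g₁ g σ(g₂)⁻¹, (t, 1) • w]` is transitive, and the stabilizer of the
base point `[1, (1,1)X_α]` is exactly the twisted diagonal subgroup `D_{σ, α, X}`; hence
`G ×_Z (T × Z)/X_α ≅ (G × G × T)/D_{σ, α, X}` as `(G × G × T)`-sets. -/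
theorem fibredProd_transitive_and_stabilizer (σ : G ≃* G) (X : Subgroup T)
    (α : X →* Subgroup.center G) :
    (∀ m : fibredProd X α, ∃ a : G × G × T, qSmul σ X α a (basePt X α) = m) ∧
    {a : G × G × T | qSmul σ X α a (basePt X α) = basePt X α} =
      (twistedDiag σ X α : Set (G × G × T)) := by
  constructor
  · intro m
    obtain ⟨⟨g, w⟩⟩ := m
    obtain ⟨⟨t, z⟩⟩ := w
    refine ⟨(g * z, 1, t), ?_⟩
    show Quotient.mk (zSetoid X α) _ = Quotient.mk (zSetoid X α) _
    apply Quotient.sound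
    refine ⟨z⁻¹, ?_⟩
    show ((g * ((z : G)⁻¹)⁻¹,
        (((1 : T), z⁻¹) : T × Subgroup.center G) • (QuotientGroup.mk ((t, z)) : _)) : G × _)
      = (g * z * 1 * (σ 1)⁻¹,
        ((t, (1 : Subgroup.center G)) : T × Subgroup.center G) •
          (QuotientGroup.mk (1 : T × Subgroup.center G)))
    refine Prod.ext (by simp) ?_
    show QuotientGroup.mk ((((1 : T), z⁻¹) : T × Subgroup.center G) * (t, z))
      = QuotientGroup.mk (((t, (1 : Subgroup.center G)) : T × Subgroup.center G) * 1)
    simp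
  · ext a
    obtain ⟨g₁, g₂, t⟩ := a
    simp only [Set.mem_setOf_eq, SetLike.mem_coe]
    constructor
    · intro h
      have h' := Quotient.exact h
      obtain ⟨z, hz⟩ := h'
      rw [Prod.ext_iff] at hz
      obtain ⟨hz1, hz2⟩ := hz
      simp only at hz1 hz2
      -- hz1 : 1 * (z : G)⁻¹ = g₁ * 1 * (σ g₂)⁻¹
      have hq : (QuotientGroup.mk ((((1 : T), z) : T × Subgroup.center G) * 1) :
          (T × Subgroup.center G) ⧸ graphSub X α)
          = QuotientGroup.mk (((t, (1 : Subgroup.center G)) : T × Subgroup.center G) * 1) := hz2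
      rw [mul_one, mul_one, QuotientGroup.eq] at hq
      obtain ⟨x, hx⟩ := hq
      rw [Prod.ext_iff] at hx
      obtain ⟨hx1, hx2⟩ := hx
      simp only [Prod.fst_mul, Prod.snd_mul, Prod.fst_inv, Prod.snd_inv] at hx1 hx2
      -- hx1 : 1⁻¹ * t = x ; hx2 : z⁻¹ * 1 = α x
      refine ⟨g₂, x, ?_⟩
      have ht : t = (x : T) := by simpa using hx1
      have hzx : z⁻¹ = α x := by simpa using hx2
      have hg : g₁ = (α x : G) * σ g₂ := by
        have : (z : G)⁻¹ = g₁ * (σ g₂)⁻¹ := by simpa using hz1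
        have h2 : ((z⁻¹ : Subgroup.center G) : G) = g₁ * (σ g₂)⁻¹ := by simpa using this
        rw [hzx] at h2
        rw [h2]
        group
      exact Prod.ext hg (Prod.ext rfl ht)
    · rintro ⟨g, x, h⟩
      rw [Prod.ext_iff, Prod.ext_iff] at h
      obtain ⟨h1, h2, h3⟩ := h
      simp only at h1 h2 h3
      subst h2; subst h1; subst h3
      show Quotient.mk (zSetoid X α) _ = Quotient.mk (zSetoid X α) _
      apply Quotient.sound
      refine ⟨(α x)⁻¹, ?_⟩
      show ((1 * (((α x)⁻¹ : Subgroup.center G) : G)⁻¹,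
          (((1 : T), (α x)⁻¹) : T × Subgroup.center G) •
            (QuotientGroup.mk (1 : T × Subgroup.center G) : _)) : G × _)
        = ((α x : G) * σ g₂ * 1 * (σ g₂)⁻¹,
          (((x : T), (1 : Subgroup.center G)) : T × Subgroup.center G) •
            (QuotientGroup.mk (1 : T × Subgroup.center G)))
      refine Prod.ext (by simp) ?_
      show QuotientGroup.mk ((((1 : T), (α x)⁻¹) : T × Subgroup.center G) * 1)
        = QuotientGroup.mk ((((x : T), (1 : Subgroup.center G)) : T × Subgroup.center G) * 1)
      rw [mul_one, mul_one, QuotientGroup.eq]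
      exact ⟨x, by simp⟩

end
end
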